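/- Let μ, ν ∈ P(X), let c : X×X → ℝ be continuous and τ > 0, and suppose (φ, ψ) is a pair of continuous functions solving the Schrödinger system for (μ, ν, c, τ). Define γ as the measure on X×X with density dγ/d(μ⊗ν)(x,y) = exp((φ(x) + ψ(y) − c(x,y))/τ). Then γ is a probability measure belonging to Π(μ,ν), it attains the infimum defining T_τ(μ,ν), and the optimal value satisfies T_τ(μ,ν) = ∫ c dγ + τ H(γ|μ⊗ν) = ∫ φ dμ + ∫ ψ dν. -/

import Mathlib

open MeasureTheory Real Set
open scoped ENNReal

abbrev Pt (d : ℕ) := EuclideanSpace ℝ (Fin d)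

-- Relative entropy `H(γ|ρ)`, with values in `(-∞, +∞]`.
open Classical in
noncomputable def relEnt {α : Type*} [MeasurableSpace α] (γ ρ : Measure α) : EReal :=
  if γ ≪ ρ ∧ Integrable (fun x => Real.log ((γ.rnDeriv ρ x).toReal)) γ
  then ((∫ x, Real.log ((γ.rnDeriv ρ x).toReal) ∂γ : ℝ) : EReal)
  else ⊤

-- Entropic optimal transport cost `T_τ(μ,ν) = inf_{γ ∈ Π(μ,ν)} ∫ c dγ + τ H(γ|μ⊗ν)`.
noncomputable def EOT {α : Type*} [MeasurableSpace α] (c : α × α → ℝ) (τ : ℝ)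
    (μ ν : Measure α) : EReal :=
  ⨅ γ : {γ : Measure (α × α) // γ.map Prod.fst = μ ∧ γ.map Prod.snd = ν},
    ((∫ q, c q ∂(γ : Measure (α × α)) : ℝ) : EReal)
      + (τ : EReal) * relEnt (γ : Measure (α × α)) (μ.prod ν)





lemma kl_nonneg {α : Type*} [MeasurableSpace α] (p q : Measure α)
    [IsProbabilityMeasure p] [IsProbabilityMeasure q] (hpq : p ≪ q)
    (hint : Integrable (fun x => Real.log ((p.rnDeriv q x).toReal)) p) :
    0 ≤ ∫ x, Real.log ((p.rnDeriv q x).toReal) ∂p := by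
  set r : α → ℝ := fun x => (p.rnDeriv q x).toReal with hr
  have hrpos : ∀ᵐ x ∂p, 0 < r x := by
    filter_upwards [Measure.rnDeriv_pos hpq, hpq (Measure.rnDeriv_lt_top p q)] with x h1 h2
    exact ENNReal.toReal_pos h1.ne' h2.ne
  set g : α → ℝ := fun x => (r x)⁻¹ with hg
  have hgmeas : Measurable g := (Measure.measurable_rnDeriv p q).ennreal_toReal.inv
  have hlin : ∫⁻ x, ENNReal.ofReal (g x) ∂p ≤ 1 := by
    have h1 : ∫⁻ x, ENNReal.ofReal (g x) ∂p = ∫⁻ x, (p.rnDeriv q x)⁻¹ ∂p := by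
      refine lintegral_congr_ae ?_
      filter_upwards [Measure.rnDeriv_pos hpq, hpq (Measure.rnDeriv_lt_top p q)] with x h1 h2
      rw [hg, hr]
      rw [ENNReal.ofReal_inv_of_pos (ENNReal.toReal_pos h1.ne' h2.ne),
        ENNReal.ofReal_toReal h2.ne]
    rw [h1]
    calc ∫⁻ x, (p.rnDeriv q x)⁻¹ ∂p
        = ∫⁻ x, (p.rnDeriv q x)⁻¹ ∂(q.withDensity (p.rnDeriv q)) := by
          rw [Measure.withDensity_rnDeriv_eq p q hpq]
      _ = ∫⁻ x, p.rnDeriv q x * (p.rnDeriv q x)⁻¹ ∂q := by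
          refine (lintegral_withDensity_eq_lintegral_mul q (Measure.measurable_rnDeriv p q)
            (Measure.measurable_rnDeriv p q).inv).trans ?_
          rfl
      _ ≤ ∫⁻ _, 1 ∂q := lintegral_mono fun x => ENNReal.mul_inv_le_one _
      _ = 1 := by simp
  have hgint : Integrable g p := by
    refine ⟨hgmeas.aestronglyMeasurable, ?_⟩
    rw [hasFiniteIntegral_iff_norm]
    calc ∫⁻ x, ENNReal.ofReal ‖g x‖ ∂p = ∫⁻ x, ENNReal.ofReal (g x) ∂p := by
          refine lintegral_congr fun x => ?_
          rw [Real.norm_eq_abs, abs_of_nonneg (by positivity)]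
      _ ≤ 1 := hlin
      _ < ⊤ := ENNReal.one_lt_top
  have hgle : ∫ x, g x ∂p ≤ 1 := by
    have h0 : 0 ≤ᵐ[p] g := Filter.Eventually.of_forall fun x => by positivity
    rw [integral_eq_lintegral_of_nonneg_ae h0 hgmeas.aestronglyMeasurable]
    have := ENNReal.toReal_mono (by simp) hlin
    simpa using this
  have hmono : ∫ x, -Real.log (r x) ∂p ≤ ∫ x, (g x - 1) ∂p := by
    refine integral_mono_ae hint.neg (hgint.sub (integrable_const 1)) ?_
    filter_upwards [hrpos] with x hx
    have : -Real.log (r x) = Real.log (r x)⁻¹ := (Real.log_inv _).symm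
    rw [this]
    exact (Real.log_le_sub_one_of_pos (by positivity))
  rw [integral_neg] at hmono
  have : ∫ x, (g x - 1) ∂p = ∫ x, g x ∂p - 1 := by
    rw [integral_sub hgint (integrable_const 1)]; simp
  linarith [hmono, hgle, this ▸ hmono]

section Helpers
variable {α : Type*} [MeasurableSpace α]

lemma ae_mem_prodXX {X : Set α} (hXm : MeasurableSet X) {μ ν : Measure α}
    (hμX : μ Xᶜ = 0) (hνX : ν Xᶜ = 0) (m : Measure (α × α))
    (h1 : m.map Prod.fst = μ) (h2 : m.map Prod.snd = ν) :
    ∀ᵐ q ∂m, q ∈ X ×ˢ X := by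
  have hf : m (Prod.fst ⁻¹' Xᶜ) = 0 := by
    rw [← Measure.map_apply measurable_fst hXm.compl, h1]; exact hμX
  have hs : m (Prod.snd ⁻¹' Xᶜ) = 0 := by
    rw [← Measure.map_apply measurable_snd hXm.compl, h2]; exact hνX
  rw [ae_iff]
  refine measure_mono_null (fun q hq => ?_) (measure_union_null hf hs)
  simp only [mem_setOf_eq, mem_prod, not_and_or] at hq
  rcases hq with h | h
  · exact Or.inl h
  · exact Or.inr h

lemma integral_comp_fst (m : Measure (α × α)) (μ : Measure α)
    (h1 : m.map Prod.fst = μ) (f : α → ℝ) (hf : AEStronglyMeasurable f μ) :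
    ∫ q, f q.1 ∂m = ∫ x, f x ∂μ := by
  rw [← h1, integral_map measurable_fst.aemeasurable (h1 ▸ hf)]

lemma integral_comp_snd (m : Measure (α × α)) (ν : Measure α)
    (h2 : m.map Prod.snd = ν) (f : α → ℝ) (hf : AEStronglyMeasurable f ν) :
    ∫ q, f q.2 ∂m = ∫ y, f y ∂ν := by
  rw [← h2, integral_map measurable_snd.aemeasurable (h2 ▸ hf)]

end Helpers

lemma key_one {α : Type*} [MeasurableSpace α] (ν : Measure α) [IsProbabilityMeasure ν]
    (h : α → ℝ) (hae : AEMeasurable h ν) {B : ℝ} (hB : ∀ᵐ y ∂ν, |h y| ≤ B)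
    (a : ℝ) (ha : a = -Real.log (∫ y, Real.exp (h y) ∂ν)) :
    ∫⁻ y, ENNReal.ofReal (Real.exp (a + h y)) ∂ν = 1 := by
  have hexp_ae : AEMeasurable (fun y => Real.exp (h y)) ν :=
    (Real.measurable_exp.comp_aemeasurable hae)
  have hint : Integrable (fun y => Real.exp (h y)) ν := by
    refine Integrable.mono' (integrable_const (Real.exp B)) hexp_ae.aestronglyMeasurable ?_
    filter_upwards [hB] with y hy
    rw [Real.norm_eq_abs, abs_of_nonneg (Real.exp_nonneg _)]
    exact Real.exp_le_exp.mpr ((abs_le.mp hy).2)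
  set I : ℝ := ∫ y, Real.exp (h y) ∂ν with hI
  have hIpos : 0 < I := by
    have hlb : ∫ y, Real.exp (-B) ∂ν ≤ I := by
      refine integral_mono_ae (integrable_const _) hint ?_
      filter_upwards [hB] with y hy
      exact Real.exp_le_exp.mpr (by linarith [(abs_le.mp hy).1])
    have : ∫ y, Real.exp (-B) ∂ν = Real.exp (-B) := by
      simp [integral_const]
    linarith [Real.exp_pos (-B), this ▸ hlb]
  have hexpa : Real.exp a = I⁻¹ := by
    rw [ha, Real.exp_neg, Real.exp_log hIpos]
  calc ∫⁻ y, ENNReal.ofReal (Real.exp (a + h y)) ∂ν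
      = ∫⁻ y, ENNReal.ofReal (Real.exp a) * ENNReal.ofReal (Real.exp (h y)) ∂ν := by
        refine lintegral_congr fun y => ?_
        rw [Real.exp_add, ENNReal.ofReal_mul (Real.exp_nonneg _)]
    _ = ENNReal.ofReal (Real.exp a) * ∫⁻ y, ENNReal.ofReal (Real.exp (h y)) ∂ν := by
        exact lintegral_const_mul'' _ (hexp_ae.ennreal_ofReal)
    _ = ENNReal.ofReal (Real.exp a) * ENNReal.ofReal I := by
        rw [← ofReal_integral_eq_lintegral_ofReal hint
          (Filter.Eventually.of_forall fun y => Real.exp_nonneg _)]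
    _ = 1 := by
        rw [← ENNReal.ofReal_mul (Real.exp_nonneg _), hexpa,
          inv_mul_cancel₀ hIpos.ne', ENNReal.ofReal_one]

lemma prob_of_fst_map {α : Type*} [MeasurableSpace α] (m : Measure (α × α)) (μ : Measure α)
    [IsProbabilityMeasure μ] (h : m.map Prod.fst = μ) : IsProbabilityMeasure m := by
  constructor
  have := Measure.map_apply (f := (Prod.fst : α × α → α)) (μ := m) measurable_fst MeasurableSet.univ
  rw [h] at this
  simpa using this.symm

lemma integrable_of_bddOn {α : Type*} [MeasurableSpace α] (m : Measure α) [IsFiniteMeasure m]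
    {f : α → ℝ} (hae : AEMeasurable f m) {S : Set α} (hmem : ∀ᵐ x ∂m, x ∈ S) {C : ℝ}
    (hC : ∀ x ∈ S, |f x| ≤ C) : Integrable f m :=
  Integrable.mono' (integrable_const C) hae.aestronglyMeasurable
    (by filter_upwards [hmem] with x hx; simpa using hC x hx)

set_option maxHeartbeats 1000000 in
/-- if `(φ,ψ)` solves the Schrödinger system then the measure `γ` with density
`exp((φ(x)+ψ(y)-c(x,y))/τ)` w.r.t. `μ⊗ν` is a coupling of `(μ,ν)` attaining the infimum
defining `T_τ(μ,ν)`, and `T_τ(μ,ν) = ∫ c dγ + τ H(γ|μ⊗ν) = ∫ φ dμ + ∫ ψ dν`. -/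
theorem stmt_3 {d : ℕ} (X : Set (Pt d)) (hXc : IsCompact X) (hXne : X.Nonempty)
    (μ ν : Measure (Pt d)) [IsProbabilityMeasure μ] [IsProbabilityMeasure ν]
    (hμX : μ Xᶜ = 0) (hνX : ν Xᶜ = 0)
    (c : Pt d × Pt d → ℝ) (hc : Continuous c) (τ : ℝ) (hτ : 0 < τ)
    (φ ψ : Pt d → ℝ) (hφc : ContinuousOn φ X) (hψc : ContinuousOn ψ X)
    (hφ : ∀ x ∈ X, φ x = -τ * Real.log (∫ y, Real.exp ((ψ y - c (x, y)) / τ) ∂ν))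
    (hψ : ∀ y ∈ X, ψ y = -τ * Real.log (∫ x, Real.exp ((φ x - c (x, y)) / τ) ∂μ))
    (γ : Measure (Pt d × Pt d))
    (hγ : γ = (μ.prod ν).withDensity
        (fun q => ENNReal.ofReal (Real.exp ((φ q.1 + ψ q.2 - c q) / τ)))) :
    IsProbabilityMeasure γ ∧ γ.map Prod.fst = μ ∧ γ.map Prod.snd = ν ∧
    ((∫ q, c q ∂γ : ℝ) : EReal) + (τ : EReal) * relEnt γ (μ.prod ν) = EOT c τ μ ν ∧
    EOT c τ μ ν = ((∫ x, φ x ∂μ + ∫ y, ψ y ∂ν : ℝ) : EReal) := by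
  subst hγ
  set ρ := μ.prod ν with hρdef
  have hXm : MeasurableSet X := hXc.isClosed.measurableSet
  have hμae : ∀ᵐ x ∂μ, x ∈ X := by rw [ae_iff]; exact hμX
  have hνae : ∀ᵐ y ∂ν, y ∈ X := by rw [ae_iff]; exact hνX
  have hφae : AEMeasurable φ μ := by
    have h1 : AEMeasurable φ (μ.restrict X) := hφc.aemeasurable hXm
    rwa [Measure.restrict_eq_self_of_ae_mem hμae] at h1
  have hψae : AEMeasurable ψ ν := by
    have h1 : AEMeasurable ψ (ν.restrict X) := hψc.aemeasurable hXm
    rwa [Measure.restrict_eq_self_of_ae_mem hνae] at h1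
  obtain ⟨Cφ, hCφ⟩ := hXc.exists_bound_of_continuousOn hφc
  obtain ⟨Cψ, hCψ⟩ := hXc.exists_bound_of_continuousOn hψc
  obtain ⟨Cc, hCc⟩ := (hXc.prod hXc).exists_bound_of_continuousOn hc.continuousOn
  simp only [Real.norm_eq_abs] at hCφ hCψ hCc
  set L : Pt d × Pt d → ℝ := fun q => (φ q.1 + ψ q.2 - c q) / τ with hLdef
  set F : Pt d × Pt d → ℝ≥0∞ :=
    fun q => ENNReal.ofReal (Real.exp ((φ q.1 + ψ q.2 - c q) / τ)) with hFdef
  have hφaeP : AEMeasurable (fun q : Pt d × Pt d => φ q.1) ρ :=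
    hφae.comp_quasiMeasurePreserving Measure.quasiMeasurePreserving_fst
  have hψaeP : AEMeasurable (fun q : Pt d × Pt d => ψ q.2) ρ :=
    hψae.comp_quasiMeasurePreserving Measure.quasiMeasurePreserving_snd
  have hLae : AEMeasurable L ρ :=
    ((hφaeP.add hψaeP).sub hc.measurable.aemeasurable).div_const τ
  have hFae : AEMeasurable F ρ := (Real.measurable_exp.comp_aemeasurable hLae).ennreal_ofReal
  -- inner integrals equal to one
  have hmarg1 : ∀ᵐ x ∂μ, ∫⁻ y, F (x, y) ∂ν = 1 := by
    filter_upwards [hμae] with x hx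
    have hhae : AEMeasurable (fun y => (ψ y - c (x, y)) / τ) ν :=
      (hψae.sub ((hc.comp (Continuous.prodMk_right x)).measurable.aemeasurable)).div_const τ
    have hbound : ∀ᵐ y ∂ν, |(ψ y - c (x, y)) / τ| ≤ (Cψ + Cc) / τ := by
      filter_upwards [hνae] with y hy
      rw [abs_div, abs_of_pos hτ]
      have h1 := hCψ y hy
      have h2 := hCc (x, y) ⟨hx, hy⟩
      gcongr
      calc |ψ y - c (x, y)| ≤ |ψ y| + |c (x, y)| := abs_sub _ _
        _ ≤ Cψ + Cc := by linarith
    have hkey := key_one ν _ hhae hbound (φ x / τ) (by rw [hφ x hx]; field_simp)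
    refine Eq.trans (lintegral_congr fun y => ?_) hkey
    show ENNReal.ofReal (Real.exp ((φ x + ψ y - c (x, y)) / τ)) = _
    rw [show (φ x + ψ y - c (x, y)) / τ = φ x / τ + (ψ y - c (x, y)) / τ by ring]
  have hmarg2 : ∀ᵐ y ∂ν, ∫⁻ x, F (x, y) ∂μ = 1 := by
    filter_upwards [hνae] with y hy
    have hhae : AEMeasurable (fun x => (φ x - c (x, y)) / τ) μ :=
      (hφae.sub ((hc.comp (continuous_id.prodMk continuous_const)).measurable.aemeasurable)).div_const τ
    have hbound : ∀ᵐ x ∂μ, |(φ x - c (x, y)) / τ| ≤ (Cφ + Cc) / τ := by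
      filter_upwards [hμae] with x hx
      rw [abs_div, abs_of_pos hτ]
      have h1 := hCφ x hx
      have h2 := hCc (x, y) ⟨hx, hy⟩
      gcongr
      calc |φ x - c (x, y)| ≤ |φ x| + |c (x, y)| := abs_sub _ _
        _ ≤ Cφ + Cc := by linarith
    have hkey := key_one μ _ hhae hbound (ψ y / τ) (by rw [hψ y hy]; field_simp)
    refine Eq.trans (lintegral_congr fun x => ?_) hkey
    show ENNReal.ofReal (Real.exp ((φ x + ψ y - c (x, y)) / τ)) = _
    rw [show (φ x + ψ y - c (x, y)) / τ = ψ y / τ + (φ x - c (x, y)) / τ by ring]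
  -- marginals
  have hmap1 : (ρ.withDensity F).map Prod.fst = μ := by
    ext s hs
    rw [Measure.map_apply measurable_fst hs, ← Set.prod_univ,
      withDensity_apply _ (hs.prod MeasurableSet.univ), ← Measure.prod_restrict,
      Measure.restrict_univ]
    have hF' : AEMeasurable F ((μ.restrict s).prod ν) :=
      hFae.mono_ac (Measure.AbsolutelyContinuous.prod
        (Measure.absolutelyContinuous_of_le Measure.restrict_le_self) .rfl)
    rw [lintegral_prod _ hF']
    calc ∫⁻ x, ∫⁻ y, F (x, y) ∂ν ∂(μ.restrict s)
        = ∫⁻ _, 1 ∂(μ.restrict s) :=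
          lintegral_congr_ae (ae_restrict_of_ae hmarg1)
      _ = μ s := by simp [Measure.restrict_apply_univ]
  have hmap2 : (ρ.withDensity F).map Prod.snd = ν := by
    ext t ht
    rw [Measure.map_apply measurable_snd ht, ← Set.univ_prod,
      withDensity_apply _ (MeasurableSet.univ.prod ht), ← Measure.prod_restrict,
      Measure.restrict_univ]
    have hF' : AEMeasurable F (μ.prod (ν.restrict t)) :=
      hFae.mono_ac (Measure.AbsolutelyContinuous.prod .rfl
        (Measure.absolutelyContinuous_of_le Measure.restrict_le_self))
    rw [lintegral_prod_symm _ hF']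
    calc ∫⁻ y, ∫⁻ x, F (x, y) ∂μ ∂(ν.restrict t)
        = ∫⁻ _, 1 ∂(ν.restrict t) :=
          lintegral_congr_ae (ae_restrict_of_ae hmarg2)
      _ = ν t := by simp [Measure.restrict_apply_univ]
  haveI hγprob : IsProbabilityMeasure (ρ.withDensity F) := prob_of_fst_map _ μ hmap1
  have hγXX : ∀ᵐ q ∂(ρ.withDensity F), q ∈ X ×ˢ X := ae_mem_prodXX hXm hμX hνX _ hmap1 hmap2
  have hacγ : ρ.withDensity F ≪ ρ := withDensity_absolutelyContinuous ρ F
  have hrnγ : (ρ.withDensity F).rnDeriv ρ =ᵐ[ρ] F := Measure.rnDeriv_withDensity₀ ρ hFae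
  have hLbd : ∀ q ∈ X ×ˢ X, |L q| ≤ (Cφ + Cψ + Cc) / τ := by
    intro q hq
    have h1 := hCφ q.1 hq.1
    have h2 := hCψ q.2 hq.2
    have h3 := hCc q hq
    show |(φ q.1 + ψ q.2 - c q) / τ| ≤ _
    rw [abs_div, abs_of_pos hτ]
    gcongr
    calc |φ q.1 + ψ q.2 - c q| ≤ |φ q.1 + ψ q.2| + |c q| := abs_sub _ _
      _ ≤ |φ q.1| + |ψ q.2| + |c q| := by linarith [abs_add_le (φ q.1) (ψ q.2)]
      _ ≤ Cφ + Cψ + Cc := by linarith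
  have hllrγ : (fun q => Real.log (((ρ.withDensity F).rnDeriv ρ q).toReal))
      =ᵐ[ρ.withDensity F] L := by
    filter_upwards [hrnγ.filter_mono hacγ.ae_le] with q hq
    rw [hq]
    show Real.log (ENNReal.ofReal (Real.exp ((φ q.1 + ψ q.2 - c q) / τ))).toReal = _
    rw [ENNReal.toReal_ofReal (Real.exp_nonneg _), Real.log_exp]
  have hLaeγ : AEMeasurable L (ρ.withDensity F) := hLae.mono_ac hacγ
  have hintγ : Integrable (fun q => Real.log (((ρ.withDensity F).rnDeriv ρ q).toReal))
      (ρ.withDensity F) := (integrable_of_bddOn _ hLaeγ hγXX hLbd).congr hllrγ.symm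
  have hrelγ : relEnt (ρ.withDensity F) ρ = ((∫ q, L q ∂(ρ.withDensity F) : ℝ) : EReal) := by
    unfold relEnt
    rw [if_pos ⟨hacγ, hintγ⟩, integral_congr_ae hllrγ]
  have hsum : ∀ m : Measure (Pt d × Pt d), m.map Prod.fst = μ → m.map Prod.snd = ν → m ≪ ρ →
      ∫ q, c q ∂m + τ * ∫ q, L q ∂m = ∫ x, φ x ∂μ + ∫ y, ψ y ∂ν := by
    intro m h1 h2 hac
    haveI : IsProbabilityMeasure m := prob_of_fst_map m μ h1
    have hmem := ae_mem_prodXX hXm hμX hνX m h1 h2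
    have hφm : Integrable (fun q : Pt d × Pt d => φ q.1) m :=
      integrable_of_bddOn m (hφaeP.mono_ac hac) hmem (fun q hq => hCφ q.1 hq.1)
    have hψm : Integrable (fun q : Pt d × Pt d => ψ q.2) m :=
      integrable_of_bddOn m (hψaeP.mono_ac hac) hmem (fun q hq => hCψ q.2 hq.2)
    have hcm : Integrable c m := integrable_of_bddOn m hc.measurable.aemeasurable hmem hCc
    have hLm : ∫ q, L q ∂m = (∫ q, (φ q.1 + ψ q.2 - c q) ∂m) / τ := by
      show ∫ q, (φ q.1 + ψ q.2 - c q) / τ ∂m = _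
      rw [integral_div]
    have hfg : Integrable (fun q : Pt d × Pt d => φ q.1 + ψ q.2) m := hφm.add hψm
    have hsplit : ∫ q, (φ q.1 + ψ q.2 - c q) ∂m
        = ∫ q, φ q.1 ∂m + ∫ q, ψ q.2 ∂m - ∫ q, c q ∂m := by
      rw [integral_sub hfg hcm, integral_add hφm hψm]
    rw [hLm, hsplit, integral_comp_fst m μ h1 φ hφae.aestronglyMeasurable,
      integral_comp_snd m ν h2 ψ hψae.aestronglyMeasurable]
    field_simp
    ring
  have hγval : ((∫ q, c q ∂(ρ.withDensity F) : ℝ) : EReal)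
      + (τ : EReal) * relEnt (ρ.withDensity F) ρ
      = ((∫ x, φ x ∂μ + ∫ y, ψ y ∂ν : ℝ) : EReal) := by
    rw [hrelγ, ← EReal.coe_mul, ← EReal.coe_add, hsum _ hmap1 hmap2 hacγ]
  have hlower : ∀ m : Measure (Pt d × Pt d), m.map Prod.fst = μ → m.map Prod.snd = ν →
      ((∫ x, φ x ∂μ + ∫ y, ψ y ∂ν : ℝ) : EReal) ≤
        ((∫ q, c q ∂m : ℝ) : EReal) + (τ : EReal) * relEnt m ρ := by
    intro m h1 h2
    haveI : IsProbabilityMeasure m := prob_of_fst_map m μ h1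
    unfold relEnt
    by_cases hcond : m ≪ ρ ∧ Integrable (fun q => Real.log ((m.rnDeriv ρ q).toReal)) m
    · obtain ⟨hac, hintm⟩ := hcond
      rw [if_pos ⟨hac, hintm⟩]
      have hmem := ae_mem_prodXX hXm hμX hνX m h1 h2
      have hρle : ρ ≪ ρ.withDensity F := withDensity_absolutelyContinuous' hFae
        (Filter.Eventually.of_forall fun q => (ENNReal.ofReal_pos.mpr (Real.exp_pos _)).ne')
      have hmγ : m ≪ ρ.withDensity F := hac.trans hρle
      have hchain := Measure.rnDeriv_mul_rnDeriv hmγ (κ := ρ)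
      have hdecomp : (fun q => Real.log ((m.rnDeriv ρ q).toReal)) =ᵐ[m]
          (fun q => Real.log ((m.rnDeriv (ρ.withDensity F) q).toReal) + L q) := by
        filter_upwards [hchain.filter_mono hac.ae_le, hrnγ.filter_mono hac.ae_le,
          Measure.rnDeriv_pos hmγ,
          (Measure.rnDeriv_lt_top m (ρ.withDensity F)).filter_mono hmγ.ae_le]
          with q e1 e2 e3 e4
        rw [← e1, Pi.mul_apply, e2]
        have hFq : (F q).toReal = Real.exp (L q) := by
          show (ENNReal.ofReal (Real.exp ((φ q.1 + ψ q.2 - c q) / τ))).toReal = _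
          rw [ENNReal.toReal_ofReal (Real.exp_nonneg _)]
        rw [ENNReal.toReal_mul, hFq,
          Real.log_mul (ENNReal.toReal_pos e3.ne' e4.ne).ne' (Real.exp_ne_zero _), Real.log_exp]
      have hLm_int : Integrable L m := integrable_of_bddOn m (hLae.mono_ac hac) hmem hLbd
      have hklint : Integrable (fun q => Real.log ((m.rnDeriv (ρ.withDensity F) q).toReal)) m := by
        refine (hintm.sub hLm_int).congr ?_
        filter_upwards [hdecomp] with q hq
        simp only [Pi.sub_apply]; linarith [hq]
      have hkl := kl_nonneg m (ρ.withDensity F) hmγ hklint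
      have hint_eq : ∫ q, Real.log ((m.rnDeriv ρ q).toReal) ∂m =
          ∫ q, Real.log ((m.rnDeriv (ρ.withDensity F) q).toReal) ∂m + ∫ q, L q ∂m := by
        rw [integral_congr_ae hdecomp, integral_add hklint hLm_int]
      have hge : ∫ q, L q ∂m ≤ ∫ q, Real.log ((m.rnDeriv ρ q).toReal) ∂m := by
        rw [hint_eq]; linarith
      have hs := hsum m h1 h2 hac
      rw [← EReal.coe_mul, ← EReal.coe_add, EReal.coe_le_coe_iff]
      nlinarith [mul_le_mul_of_nonneg_left hge hτ.le]
    · rw [if_neg hcond, EReal.coe_mul_top_of_pos hτ, EReal.coe_add_top]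
      exact le_top
  have hEOT : EOT c τ μ ν = ((∫ x, φ x ∂μ + ∫ y, ψ y ∂ν : ℝ) : EReal) := by
    unfold EOT
    rw [← hρdef]
    refine le_antisymm ?_ (le_iInf fun g => hlower g.1 g.2.1 g.2.2)
    exact le_trans (iInf_le _ (⟨ρ.withDensity F, hmap1, hmap2⟩ :
      {g : Measure (Pt d × Pt d) // g.map Prod.fst = μ ∧ g.map Prod.snd = ν}))
      (le_of_eq hγval)
  exact ⟨hγprob, hmap1, hmap2, by rw [hγval, hEOT], hEOT⟩
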